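/- Let q be an odd prime power and t ∈ GF(q). The number of matrices X ∈ SL(2,q) with Tr(X) = t equals q·(q + δ(t)), where δ(t) = -1 if t² - 4 is a non-square in GF(q), δ(t) = 0 if t² - 4 = 0, and δ(t) = 1 if t² - 4 is a nonzero square in GF(q). -/

import Mathlib

open Classical

private lemma card_c {F : Type*} [Field F] [Fintype F] (b m : F) :
    (Fintype.card {c : F // b * c = m} : ℤ) =
      if b = 0 then (if m = 0 then (Fintype.card F : ℤ) else 0) else 1 := by
  by_cases hb : b = 0
  · subst hb
    rw [if_pos rfl]
    by_cases hm : m = 0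
    · subst hm
      rw [if_pos rfl]
      norm_cast
      exact Fintype.card_congr (Equiv.subtypeUnivEquiv (fun c => by simp))
    · rw [if_neg hm]
      norm_cast
      rw [Fintype.card_eq_zero_iff]
      exact ⟨fun c => hm (by simpa using c.2.symm)⟩
  · rw [if_neg hb]
    norm_cast
    rw [Fintype.card_congr (Equiv.subtypeEquivRight (q := fun c => c = b⁻¹ * m)
      (fun c => ⟨fun h => by rw [← h, inv_mul_cancel_left₀ hb],
        fun h => by rw [h, mul_inv_cancel_left₀ hb]⟩))]
    exact Fintype.card_subtype_eq _

private lemma card_pairs {F : Type*} [Field F] [Fintype F] (m : F) :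
    (Fintype.card {p : F × F // p.1 * p.2 = m} : ℤ) =
      ((Fintype.card F : ℤ) - 1) + (if m = 0 then (Fintype.card F : ℤ) else 0) := by
  rw [Fintype.card_congr (Equiv.subtypeProdEquivSigmaSubtype (fun b c : F => b * c = m)),
    Fintype.card_sigma]
  push_cast
  rw [Finset.sum_congr rfl (fun b _ => card_c b m)]
  set A : ℤ := if m = 0 then (Fintype.card F : ℤ) else 0 with hA
  have h1 : ∀ b : F, (if b = 0 then A else (1 : ℤ)) =
      (if b = 0 then A - 1 else 0) + 1 := by
    intro b; split <;> ring
  rw [Finset.sum_congr rfl (fun b _ => h1 b), Finset.sum_add_distrib,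
    Finset.sum_ite_eq' Finset.univ (0 : F) (fun _ => A - 1)]
  simp [Finset.card_univ]
  ring

private lemma card_roots {F : Type*} [Field F] [Fintype F] (hF2 : ringChar F ≠ 2) (t : F) :
    (Fintype.card {a : F // a * (t - a) - 1 = 0} : ℤ) =
      quadraticChar F (t ^ 2 - 4) + 1 := by
  have h2 : (2 : F) ≠ 0 := Ring.two_ne_zero hF2
  have e : {a : F // a * (t - a) - 1 = 0} ≃ {x : F // x ^ 2 = t ^ 2 - 4} :=
    { toFun := fun a => ⟨2 * a.1 - t, by linear_combination (-4 : F) * a.2⟩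
      invFun := fun x => ⟨(x.1 + t) / 2, by
        have hx := x.2
        field_simp
        linear_combination -hx⟩
      left_inv := fun a => by
        apply Subtype.ext
        show (2 * a.1 - t + t) / 2 = a.1
        field_simp
        ring
      right_inv := fun x => by
        apply Subtype.ext
        show 2 * ((x.1 + t) / 2) - t = x.1
        field_simp
        ring }
  rw [Fintype.card_congr e]
  have := quadraticChar_card_sqrts hF2 (t ^ 2 - 4)
  rw [← this]
  norm_cast
  rw [Set.toFinset_card]
  exact Fintype.card_congr (Equiv.refl _)

/-- the number of X ∈ SL(2,q) with Tr X = t equals q(q + δ(t)). -/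
theorem stmt11 (F : Type*) [Field F] [Fintype F] (hodd : Odd (Fintype.card F)) (t : F) :
    (Nat.card {X : Matrix (Fin 2) (Fin 2) F // X.det = 1 ∧ X.trace = t} : ℤ) =
      (Fintype.card F : ℤ) * ((Fintype.card F : ℤ) +
        (if t ^ 2 - 4 = 0 then 0 else if IsSquare (t ^ 2 - 4) then 1 else -1)) := by
  have hF2 : ringChar F ≠ 2 := by
    intro h
    have := FiniteField.even_card_of_char_two h
    rw [Nat.odd_iff] at hodd
    omega
  set q : ℤ := (Fintype.card F : ℤ) with hq
  -- step 1: reduce to triples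
  have e : {X : Matrix (Fin 2) (Fin 2) F // X.det = 1 ∧ X.trace = t} ≃
      {p : F × F × F // p.1 * (t - p.1) - p.2.1 * p.2.2 = 1} :=
    { toFun := fun X => ⟨(X.1 0 0, X.1 0 1, X.1 1 0), by
        obtain ⟨X, hd, ht⟩ := X
        rw [Matrix.det_fin_two] at hd
        rw [Matrix.trace_fin_two] at ht
        show X 0 0 * (t - X 0 0) - X 0 1 * X 1 0 = 1
        linear_combination hd - X 0 0 * ht⟩
      invFun := fun p => ⟨!![p.1.1, p.1.2.1; p.1.2.2, t - p.1.1], by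
        constructor
        · rw [Matrix.det_fin_two_of]
          linear_combination p.2
        · rw [Matrix.trace_fin_two_of]
          ring⟩
      left_inv := fun X => by
        apply Subtype.ext
        obtain ⟨X, hd, ht⟩ := X
        rw [Matrix.trace_fin_two] at ht
        show !![X 0 0, X 0 1; X 1 0, t - X 0 0] = X
        have h11 : t - X 0 0 = X 1 1 := by linear_combination -ht
        rw [h11]
        exact (Matrix.eta_fin_two X).symm
      right_inv := fun p => by
        apply Subtype.ext
        show (_, _, _) = p.1
        simp }
  rw [Nat.card_eq_fintype_card, Fintype.card_congr (e.trans
    (Equiv.subtypeProdEquivSigmaSubtype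
      (fun a (bc : F × F) => a * (t - a) - bc.1 * bc.2 = 1))), Fintype.card_sigma]
  push_cast
  have h1 : ∀ a : F, (Fintype.card {bc : F × F // a * (t - a) - bc.1 * bc.2 = 1} : ℤ) =
      (q - 1) + if a * (t - a) - 1 = 0 then q else 0 := by
    intro a
    rw [Fintype.card_congr (Equiv.subtypeEquivRight
      (q := fun bc : F × F => bc.1 * bc.2 = a * (t - a) - 1)
      (fun bc => ⟨fun h => by linear_combination -h, fun h => by linear_combination -h⟩))]
    rw [card_pairs]
  rw [Finset.sum_congr rfl (fun a _ => h1 a), Finset.sum_add_distrib, Finset.sum_const,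
    Finset.card_univ, Finset.sum_ite, Finset.sum_const, Finset.sum_const_zero]
  simp only [nsmul_eq_mul, add_zero]
  have hroots : ((Finset.univ.filter (fun a : F => a * (t - a) - 1 = 0)).card : ℤ) =
      quadraticChar F (t ^ 2 - 4) + 1 := by
    rw [← Fintype.card_subtype, card_roots hF2 t]
  have hchi : (quadraticChar F (t ^ 2 - 4) : ℤ) =
      (if t ^ 2 - 4 = 0 then 0 else if IsSquare (t ^ 2 - 4) then 1 else -1) := by
    rw [quadraticChar_apply, quadraticCharFun]
  rw [hroots, hchi]
  ring
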